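/- Let μ be a distribution over {0,1}^m with full support (every point of {0,1}^m has positive probability). For every ε > 0 there exists γ > 0 such that the following holds for all n: if φ_1,…,φ_m : {0,1}^n → {0,1} are functions satisfying ε ≤ E_{(μ|_j)^n}[φ_j] ≤ 1 − ε for all j ∈ [m], then for every α ∈ {0,1}^m, Pr_{(y^{(1)},…,y^{(m)}) ~ μ^n}[(φ_1(y^{(1)}),…,φ_m(y^{(m)})) = α] > γ, where the n columns (y^{(1)}_i,…,y^{(m)}_i) are drawn i.i.d. from μ. -/

import Mathlib

open Finset

attribute [local instance 10] Classical.propDecidable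

noncomputable section

/-- The marginal distribution of the `j`-th coordinate of a distribution `μ` on `{0,1}^m`. -/
def marg {m : ℕ} (μ : (Fin m → Bool) → ℝ) (j : Fin m) (b : Bool) : ℝ :=
  ∑ w : Fin m → Bool, if w j = b then μ w else 0

/-- The real value of a bit. -/
def bval (b : Bool) : ℝ := if b then 1 else 0

/-- The expectation `E_{ν^n}[φ]` of a Boolean function under a product distribution. -/
def expProd {n : ℕ} (ν : Bool → ℝ) (φ : (Fin n → Bool) → Bool) : ℝ :=
  ∑ x : Fin n → Bool, (∏ i, ν (x i)) * bval (φ x)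

namespace HL
open Finset

noncomputable def g (x : ℝ) : ℝ := Real.exp (-x) - 1 + x

lemma g_nonneg (x : ℝ) : 0 ≤ g x := by
  have h := Real.add_one_le_exp (-x); unfold g; linarith

lemma exp_neg_mul_le {v : ℝ} (hv : 0 ≤ v) : Real.exp (-v) * (1 + v) ≤ 1 := by
  have h := Real.add_one_le_exp v
  have h2 : Real.exp (-v) * (1 + v) ≤ Real.exp (-v) * Real.exp v :=
    mul_le_mul_of_nonneg_left (by linarith) (Real.exp_pos _).le
  rwa [← Real.exp_add, neg_add_cancel, Real.exp_zero] at h2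

lemma g_quad {v : ℝ} (hv : |v| ≤ 1/2) : g v ≤ 2 * v^2 := by
  unfold g
  rcases le_or_gt 0 v with h | h
  · have h1 := exp_neg_mul_le h
    nlinarith [Real.exp_pos (-v)]
  · have hv1 : -v ≤ 1/2 := by rw [abs_of_neg h] at hv; exact hv
    have hprod : Real.exp v * Real.exp (-v) = 1 := by
      rw [← Real.exp_add, add_neg_cancel, Real.exp_zero]
    nlinarith [Real.exp_pos v, hprod, Real.add_one_le_exp v, sq_nonneg v]

lemma pair_lb_nonneg (z L : ℝ) (hL : 0 ≤ L) :
    2 * Real.log (1 + L^2/32) ≤ g z + g (z + L) := by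
  set c : ℝ := (1 + Real.exp (-L))/2 with hc
  have hcpos : 0 < c := by positivity
  have key := Real.add_one_le_exp (Real.log c - z)
  have e1 : Real.exp (Real.log c - z) = c * Real.exp (-z) := by
    rw [sub_eq_add_neg, Real.exp_add, Real.exp_log hcpos]
  have e2 : g z + g (z + L) = 2*(c * Real.exp (-z)) + 2*z + L - 2 := by
    unfold g
    rw [show -(z+L) = -z + -L by ring, Real.exp_add, hc]; ring
  have h3 : 2 * Real.log c + L ≤ g z + g (z + L) := by
    rw [e2, ← e1]; nlinarith [key]
  have e4 : 2 * Real.log c + L = 2 * Real.log (c * Real.exp (L/2)) := by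
    rw [Real.log_mul hcpos.ne' (Real.exp_ne_zero _), Real.log_exp]; ring
  have h5 : 1 + L^2/32 ≤ c * Real.exp (L/2) := by
    have a1 : (1 + L/4)^2 ≤ Real.exp (L/2) := by
      have t1 := Real.add_one_le_exp (L/4)
      have t2 : (1 + L/4)^2 ≤ (Real.exp (L/4))^2 := by
        apply sq_le_sq' <;> nlinarith [Real.exp_pos (L/4)]
      calc (1 + L/4)^2 ≤ (Real.exp (L/4))^2 := t2
        _ = Real.exp (L/2) := by rw [sq, ← Real.exp_add]; ring_nf
    have a2 : 1 - L/2 ≤ Real.exp (-L/2) := by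
      have := Real.add_one_le_exp (-L/2); linarith
    have e6 : c * Real.exp (L/2) = (Real.exp (L/2) + Real.exp (-L/2))/2 := by
      have h9 : Real.exp (-L) * Real.exp (L/2) = Real.exp (-L/2) := by
        rw [← Real.exp_add]; congr 1; ring
      rw [hc]
      field_simp
      rw [neg_div] at h9; linear_combination h9
    rw [e6]; nlinarith
  have h7 : Real.log (1 + L^2/32) ≤ Real.log (c * Real.exp (L/2)) := by
    apply Real.log_le_log (by positivity) h5
  linarith [e4 ▸ h3]

lemma pair_lb (z d : ℝ) : 2 * Real.log (1 + d^2/32) ≤ g z + g (z + d) := by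
  rcases le_or_gt 0 d with h | h
  · exact pair_lb_nonneg z d h
  · have := pair_lb_nonneg (z + d) (-d) (by linarith)
    rw [show z + d + -d = z by ring] at this
    rw [show (-d)^2 = d^2 by ring] at this
    linarith

lemma log_one_add_ge {v : ℝ} (hv : 0 ≤ v) : v/(1+v) ≤ Real.log (1+v) := by
  have h1 : (0:ℝ) < 1 + v := by linarith
  have h2 := Real.log_le_sub_one_of_pos (show (0:ℝ) < (1+v)⁻¹ by positivity)
  rw [Real.log_inv] at h2
  have : Real.log (1+v) ≥ 1 - (1+v)⁻¹ := by linarith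
  have e : 1 - (1+v)⁻¹ = v/(1+v) := by field_simp; ring
  linarith [e ▸ this]

lemma exp_le_one_add_two {x : ℝ} (h0 : 0 ≤ x) (h1 : x ≤ 1/2) : Real.exp x ≤ 1 + 2*x := by
  have h3 := Real.add_one_le_exp (-x)
  have h4 : Real.exp x * (1 - x) ≤ Real.exp x * Real.exp (-x) :=
    mul_le_mul_of_nonneg_left (by linarith) (Real.exp_pos _).le
  rw [← Real.exp_add, add_neg_cancel, Real.exp_zero] at h4
  nlinarith [Real.exp_pos x]

lemma one_sub_exp_ge {v : ℝ} (h0 : 0 ≤ v) (h1 : v ≤ 1) : v/2 ≤ 1 - Real.exp (-v) := by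
  have h2 : Real.exp (-v) * (1 + v) ≤ 1 := exp_neg_mul_le h0
  nlinarith [Real.exp_pos (-v)]

noncomputable def del (m : ℕ) (μ : (Fin m → Bool) → ℝ) : ℝ :=
  min (Finset.univ.inf' Finset.univ_nonempty μ) (1/2)

noncomputable def Kc (m : ℕ) (μ : (Fin m → Bool) → ℝ) : ℝ :=
  Real.log (1 / del m μ) / del m μ

noncomputable def pc (m : ℕ) (μ : (Fin m → Bool) → ℝ) : ℝ :=
  del m μ / (64 * (m+1) * (Kc m μ + 1)^2)

variable {m : ℕ} {μ : (Fin m → Bool) → ℝ}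

lemma del_pos (hpos : ∀ w, 0 < μ w) : 0 < del m μ := by
  unfold del
  apply lt_min _ (by norm_num)
  rw [Finset.lt_inf'_iff]
  exact fun b _ => hpos b

lemma del_le_half : del m μ ≤ 1/2 := min_le_right _ _

lemma del_le (w : Fin m → Bool) : del m μ ≤ μ w :=
  le_trans (min_le_left _ _) (Finset.inf'_le _ (Finset.mem_univ w))

lemma Kc_eq (hpos : ∀ w, 0 < μ w) : Real.log (1 / del m μ) = del m μ * Kc m μ := by
  unfold Kc
  rw [mul_comm, div_mul_cancel₀ _ (del_pos hpos).ne']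

lemma log_inv_del_ge (hpos : ∀ w, 0 < μ w) : Real.log 2 ≤ Real.log (1 / del m μ) := by
  apply Real.log_le_log (by norm_num)
  rw [le_div_iff₀ (del_pos hpos)]
  linarith [del_le_half (m := m) (μ := μ)]

lemma Kc_ge_one (hpos : ∀ w, 0 < μ w) : 1 ≤ Kc m μ := by
  have h1 := log_inv_del_ge hpos
  have h2 := del_pos hpos
  have h3 := del_le_half (m := m) (μ := μ)
  have hl2 : (0.6931471803 : ℝ) < Real.log 2 := Real.log_two_gt_d9
  unfold Kc
  rw [le_div_iff₀ h2]
  nlinarith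

lemma pc_pos (hpos : ∀ w, 0 < μ w) : 0 < pc m μ := by
  have h1 := Kc_ge_one hpos
  have h2 := del_pos hpos
  unfold pc
  positivity

lemma pc_lt_one (hpos : ∀ w, 0 < μ w) : pc m μ < 1 := by
  have h1 := Kc_ge_one hpos
  have h2 := del_pos hpos
  have h3 := del_le_half (m := m) (μ := μ)
  unfold pc
  rw [div_lt_one (by positivity)]
  nlinarith [Nat.cast_nonneg (α := ℝ) m]

lemma pc_K_le (hpos : ∀ w, 0 < μ w) : pc m μ * Kc m μ ≤ 1/8 := by
  have h1 := Kc_ge_one hpos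
  have h2 := del_pos hpos
  have h3 := del_le_half (m := m) (μ := μ)
  have hm := Nat.cast_nonneg (α := ℝ) m
  unfold pc
  rw [div_mul_eq_mul_div, div_le_iff₀ (by positivity)]
  nlinarith

lemma pc_KKm_le (hpos : ∀ w, 0 < μ w) :
    pc m μ * (8 * Kc m μ ^2 * m) ≤ 1/2 := by
  have h1 := Kc_ge_one hpos
  have h2 := del_pos hpos
  have h3 := del_le_half (m := m) (μ := μ)
  have hm := Nat.cast_nonneg (α := ℝ) m
  unfold pc
  rw [div_mul_eq_mul_div, div_le_iff₀ (by positivity)]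
  have key : (m:ℝ) * Kc m μ^2 ≤ (m+1) * (Kc m μ + 1)^2 := by nlinarith
  have t1 : del m μ * (8 * Kc m μ^2 * m) ≤ (1/2) * (8 * Kc m μ^2 * m) := by
    apply mul_le_mul_of_nonneg_right h3 (by positivity)
  nlinarith

lemma pc_main_le (hpos : ∀ w, 0 < μ w) :
    pc m μ * (64 * m * (1 + Kc m μ^2/8)) ≤ del m μ := by
  have h1 := Kc_ge_one hpos
  have h2 := del_pos hpos
  have hm := Nat.cast_nonneg (α := ℝ) m
  unfold pc
  rw [div_mul_eq_mul_div, div_le_iff₀ (by positivity)]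
  have key : (m:ℝ) * (1 + Kc m μ^2/8) ≤ (m+1) * (Kc m μ + 1)^2 := by nlinarith
  nlinarith

lemma marg_apply (hsum : ∑ w, μ w = 1) (j : Fin m) (h : Bool → ℝ) :
    ∑ b, marg μ j b * h b = ∑ w, μ w * h (w j) := by
  unfold marg
  calc ∑ b, (∑ w, if w j = b then μ w else 0) * h b
      = ∑ b, ∑ w, (if w j = b then μ w * h b else 0) := by
        refine Finset.sum_congr rfl fun b _ => ?_
        rw [Finset.sum_mul]
        refine Finset.sum_congr rfl fun w _ => ?_
        split <;> simp
    _ = ∑ w, ∑ b, (if w j = b then μ w * h b else 0) := Finset.sum_comm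
    _ = ∑ w, μ w * h (w j) := by
        refine Finset.sum_congr rfl fun w _ => ?_
        simp

lemma marg_sum (hsum : ∑ w, μ w = 1) (j : Fin m) : ∑ b, marg μ j b = 1 := by
  have := marg_apply (μ := μ) hsum j (fun _ => 1)
  simpa [hsum] using this

lemma marg_ge (hpos : ∀ w, 0 < μ w) (j : Fin m) (b : Bool) : del m μ ≤ marg μ j b := by
  unfold marg
  have h1 : μ (fun _ => b) ≤ ∑ w : Fin m → Bool, if w j = b then μ w else 0 := by
    have := Finset.single_le_sum (f := fun w : Fin m → Bool => if w j = b then μ w else 0)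
      (fun w _ => by split_ifs <;> simp [(hpos w).le]) (Finset.mem_univ (fun _ => b))
    simpa using this
  exact le_trans (del_le _) h1

lemma marg_nonneg (hpos : ∀ w, 0 < μ w) (j : Fin m) (b : Bool) : 0 ≤ marg μ j b :=
  le_trans (del_pos hpos).le (marg_ge hpos j b)

lemma marg_le (hpos : ∀ w, 0 < μ w) (hsum : ∑ w, μ w = 1) (j : Fin m) (b : Bool) :
    marg μ j b ≤ 1 - del m μ := by
  have h1 := marg_sum (μ := μ) hsum j
  rw [Fintype.sum_bool] at h1
  have h2 := marg_ge hpos j (!b)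
  cases b <;> simp at h2 <;> linarith

lemma one_sub_del_le (hpos : ∀ w, 0 < μ w) : 1 - del m μ ≤ del m μ ^ pc m μ := by
  have hδ := del_pos hpos
  have hδh := del_le_half (m := m) (μ := μ)
  have e1 : del m μ ^ pc m μ = Real.exp (Real.log (del m μ) * pc m μ) :=
    Real.rpow_def_of_pos hδ _
  have e2 : Real.log (del m μ) = -Real.log (1 / del m μ) := by
    rw [one_div, Real.log_inv, neg_neg]
  have h3 := Real.add_one_le_exp (Real.log (del m μ) * pc m μ)
  have h4 : Real.log (1 / del m μ) * pc m μ ≤ del m μ := by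
    rw [Kc_eq hpos]
    have := pc_K_le hpos
    have hKpos : (0:ℝ) < Kc m μ := lt_of_lt_of_le one_pos (Kc_ge_one hpos)
    calc del m μ * Kc m μ * pc m μ = del m μ * (pc m μ * Kc m μ) := by ring
      _ ≤ del m μ * 1 := by
          apply mul_le_mul_of_nonneg_left _ hδ.le
          linarith
      _ = del m μ := mul_one _
  rw [e1]
  rw [e2] at h3 ⊢
  nlinarith [h3]

/-- the "degenerate side" bound for a single coordinate -/
lemma two_point_zero (hpos : ∀ w, 0 < μ w) {ν1 c : ℝ} (hν1 : ν1 ≤ 1 - del m μ)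
    (hν1' : 0 ≤ ν1) (hc : 0 ≤ c) :
    ν1 * c ^ pc m μ ≤ (del m μ * c) ^ pc m μ := by
  have h1 := one_sub_del_le hpos
  have h2 : ν1 * c ^ pc m μ ≤ del m μ ^ pc m μ * c ^ pc m μ := by
    apply mul_le_mul_of_nonneg_right _ (Real.rpow_nonneg hc _)
    linarith
  rw [Real.mul_rpow (del_pos hpos).le hc]
  exact h2

/-- the "big spread" bound for a single coordinate -/
lemma two_point_spread (hpos : ∀ w, 0 < μ w) {ν0 ν1 a b : ℝ}
    (hν1 : del m μ ≤ ν1) (hν0 : 0 ≤ ν0) (hs : ν0 + ν1 = 1)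
    (ha : 0 < a) (hb : 0 < b)
    (hD : 2 * Kc m μ ≤ Real.log a - Real.log b) :
    ν0 * a ^ pc m μ + ν1 * b ^ pc m μ ≤ (del m μ * a) ^ pc m μ := by
  set p := pc m μ with hpdef
  set δ := del m μ with hδdef
  set K := Kc m μ with hKdef
  have hδ : 0 < δ := del_pos hpos
  have hK1 : 1 ≤ K := Kc_ge_one hpos
  have hp : 0 < p := pc_pos hpos
  have hpK := pc_K_le hpos
  set s : ℝ := Real.log a - Real.log b with hsdef
  have hs2K : 2 * K ≤ s := hD
  have hbe : b = a * Real.exp (-s) := by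
    have h9 : a * Real.exp (-s) = Real.exp (Real.log a + -s) := by
      rw [Real.exp_add, Real.exp_log ha]
    rw [h9, hsdef, show Real.log a + -(Real.log a - Real.log b) = Real.log b by ring,
      Real.exp_log hb]
  have hbp : b ^ p = a ^ p * Real.exp (-(s * p)) := by
    rw [hbe, Real.mul_rpow ha.le (Real.exp_pos _).le, ← Real.exp_mul, neg_mul]
  have hexp_mono : Real.exp (-(s*p)) ≤ Real.exp (-(2*K*p)) := by
    apply Real.exp_le_exp.mpr
    have : 2*K*p ≤ s*p := mul_le_mul_of_nonneg_right hs2K hp.le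
    linarith
  have h1e : p * K ≤ 1 - Real.exp (-(2*K*p)) := by
    have := one_sub_exp_ge (v := 2*K*p) (by positivity) (by nlinarith)
    calc p * K = (2*K*p)/2 := by ring
      _ ≤ 1 - Real.exp (-(2*K*p)) := this
  -- key: ν0 + ν1 * exp(-(s*p)) ≤ 1 - δ*p*K ≤ exp(-(p*log(1/δ))) = δ^p
  have hkey : ν0 + ν1 * Real.exp (-(s*p)) ≤ δ ^ p := by
    have t1 : ν1 * Real.exp (-(s*p)) ≤ ν1 * Real.exp (-(2*K*p)) :=
      mul_le_mul_of_nonneg_left hexp_mono (by linarith)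
    have t2 : δ * (p*K) ≤ ν1 * (1 - Real.exp (-(2*K*p))) := by
      apply mul_le_mul hν1 h1e _ (by linarith)
      nlinarith
    have t3 : ν0 + ν1 * Real.exp (-(s*p)) ≤ 1 - δ*(p*K) := by nlinarith
    have t4 : δ ^ p = Real.exp (Real.log δ * p) := Real.rpow_def_of_pos hδ _
    have t5 : Real.log δ * p = -(δ * (p*K)) := by
      have e2 : Real.log δ = -Real.log (1 / δ) := by
        rw [one_div, Real.log_inv, neg_neg]
      rw [e2, Kc_eq hpos]
      ring
    have t6 := Real.add_one_le_exp (Real.log δ * p)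
    rw [t4]
    rw [t5] at t6 ⊢
    linarith
  have hfin : ν0 * a ^ p + ν1 * b ^ p = a ^ p * (ν0 + ν1 * Real.exp (-(s*p))) := by
    rw [hbp]; ring
  rw [hfin, Real.mul_rpow hδ.le ha.le]
  calc a ^ p * (ν0 + ν1 * Real.exp (-(s*p))) ≤ a ^ p * δ ^ p :=
        mul_le_mul_of_nonneg_left hkey (Real.rpow_nonneg ha.le _)
    _ = δ ^ p * a ^ p := mul_comm _ _

set_option maxHeartbeats 2000000 in
lemma onedim (hpos : ∀ w, 0 < μ w) (hsum : ∑ w, μ w = 1)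
    (f : Fin m → Bool → ℝ) (hf : ∀ j b, 0 ≤ f j b) :
    ∏ j, (∑ b, marg μ j b * f j b ^ pc m μ) ^ (pc m μ)⁻¹ ≤
      ∑ w, μ w * ∏ j, f j (w j) := by
  classical
  set p := pc m μ with hpdef
  set δ := del m μ with hδdef
  set K := Kc m μ with hKdef
  have hδ : 0 < δ := del_pos hpos
  have hδh : δ ≤ 1/2 := del_le_half
  have hK1 : 1 ≤ K := Kc_ge_one hpos
  have hp : 0 < p := pc_pos hpos
  have hpK := pc_K_le hpos
  rw [← hpdef, ← hKdef] at hpK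
  set M : Fin m → ℝ := fun j => max (f j false) (f j true) with hMdef
  have hM : ∀ j, 0 ≤ M j := fun j => le_trans (hf j false) (le_max_left _ _)
  have hMf : ∀ j b, f j b ≤ M j := by
    intro j b; cases b
    · exact le_max_left _ _
    · exact le_max_right _ _
  set S : Fin m → ℝ := fun j => ∑ b, marg μ j b * f j b ^ p with hSdef
  have hSnn : ∀ j, 0 ≤ S j := by
    intro j
    apply Finset.sum_nonneg
    intro b _
    exact mul_nonneg (marg_nonneg hpos j b) (Real.rpow_nonneg (hf j b) _)
  set Bj : Fin m → ℝ := fun j => S j ^ p⁻¹ with hBdef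
  have hBnn : ∀ j, 0 ≤ Bj j := fun j => Real.rpow_nonneg (hSnn j) _
  have hA_lb : δ * ∏ j, M j ≤ ∑ w, μ w * ∏ j, f j (w j) := by
    set ws : Fin m → Bool := fun j => if f j false ≤ f j true then true else false with hws
    have hwsM : ∏ j, f j (ws j) = ∏ j, M j := by
      apply Finset.prod_congr rfl
      intro j _
      rw [hws]
      dsimp only
      split_ifs with h
      · rw [hMdef]; dsimp only; rw [max_eq_right h]
      · rw [hMdef]; dsimp only; rw [max_eq_left (le_of_not_ge h)]
    have h1 : μ ws * ∏ j, f j (ws j) ≤ ∑ w, μ w * ∏ j, f j (w j) :=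
      Finset.single_le_sum
        (fun w _ => mul_nonneg (hpos w).le (Finset.prod_nonneg fun j _ => hf j (w j)))
        (Finset.mem_univ ws)
    have h2 : δ * ∏ j, M j ≤ μ ws * ∏ j, M j :=
      mul_le_mul_of_nonneg_right (del_le ws) (Finset.prod_nonneg fun j _ => hM j)
    rw [hwsM] at h1
    linarith
  have hS_le : ∀ j, S j ≤ M j ^ p := by
    intro j
    calc S j ≤ ∑ b, marg μ j b * M j ^ p := by
          apply Finset.sum_le_sum
          intro b _
          exact mul_le_mul_of_nonneg_left
            (Real.rpow_le_rpow (hf j b) (hMf j b) hp.le) (marg_nonneg hpos j b)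
      _ = M j ^ p := by rw [← Finset.sum_mul, marg_sum hsum j, one_mul]
  have hBj_le : ∀ j, Bj j ≤ M j := by
    intro j
    calc Bj j ≤ (M j ^ p) ^ p⁻¹ :=
          Real.rpow_le_rpow (hSnn j) (hS_le j) (by positivity)
      _ = M j := Real.rpow_rpow_inv (hM j) hp.ne'
  by_cases hcase : ∃ j, Bj j ≤ δ * M j
  · obtain ⟨j₀, hj₀⟩ := hcase
    have hchain : ∏ j, Bj j ≤ δ * ∏ j, M j := by
      calc ∏ j, Bj j = Bj j₀ * ∏ j ∈ Finset.univ.erase j₀, Bj j :=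
            (Finset.mul_prod_erase _ _ (Finset.mem_univ j₀)).symm
        _ ≤ (δ * M j₀) * ∏ j ∈ Finset.univ.erase j₀, M j := by
            apply mul_le_mul hj₀
              (Finset.prod_le_prod (fun j _ => hBnn j) (fun j _ => hBj_le j))
              (Finset.prod_nonneg fun j _ => hBnn j)
              (mul_nonneg hδ.le (hM j₀))
        _ = δ * (M j₀ * ∏ j ∈ Finset.univ.erase j₀, M j) := by ring
        _ = δ * ∏ j, M j := by rw [Finset.mul_prod_erase _ _ (Finset.mem_univ j₀)]
    linarith
  · push_neg at hcase
    -- in this branch all f j b are positive and log-spreads are small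
    have hkey : ∀ j, 0 < f j false ∧ 0 < f j true ∧
        |Real.log (f j false) - Real.log (f j true)| < 2 * K := by
      intro j
      by_contra hbad
      apply absurd (hcase j)
      push_neg
      have hSj : S j = marg μ j true * f j true ^ p + marg μ j false * f j false ^ p := by
        rw [hSdef]; exact Fintype.sum_bool _
      -- show Bj j ≤ δ * M j
      have hgoal : Bj j ≤ δ * M j := by
        rcases le_or_gt (f j false) 0 with h0 | h0
        · have hf0 : f j false = 0 := le_antisymm h0 (hf j false)
          have hM0 : M j = f j true := by rw [hMdef]; dsimp only; rw [max_eq_right (hf0 ▸ hf j true)]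
          have : S j = marg μ j true * f j true ^ p := by
            rw [hSj, hf0, Real.zero_rpow hp.ne', mul_zero, add_zero]
          rw [hBdef]; dsimp only
          rw [this, hM0]
          calc (marg μ j true * f j true ^ p) ^ p⁻¹ ≤ ((δ * f j true) ^ p) ^ p⁻¹ := by
                apply Real.rpow_le_rpow
                  (mul_nonneg (marg_nonneg hpos j true) (Real.rpow_nonneg (hf j true) _)) _
                  (by positivity)
                exact two_point_zero hpos (marg_le hpos hsum j true)
                  (marg_nonneg hpos j true) (hf j true)
            _ = δ * f j true := Real.rpow_rpow_inv (mul_nonneg hδ.le (hf j true)) hp.ne'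
        rcases le_or_gt (f j true) 0 with h1 | h1
        · have hf1 : f j true = 0 := le_antisymm h1 (hf j true)
          have hM1 : M j = f j false := by rw [hMdef]; dsimp only; rw [max_eq_left (hf1 ▸ hf j false)]
          have : S j = marg μ j false * f j false ^ p := by
            rw [hSj, hf1, Real.zero_rpow hp.ne', mul_zero, zero_add]
          rw [hBdef]; dsimp only
          rw [this, hM1]
          calc (marg μ j false * f j false ^ p) ^ p⁻¹ ≤ ((δ * f j false) ^ p) ^ p⁻¹ := by
                apply Real.rpow_le_rpow
                  (mul_nonneg (marg_nonneg hpos j false) (Real.rpow_nonneg (hf j false) _)) _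
                  (by positivity)
                exact two_point_zero hpos (marg_le hpos hsum j false)
                  (marg_nonneg hpos j false) (hf j false)
            _ = δ * f j false := Real.rpow_rpow_inv (mul_nonneg hδ.le (hf j false)) hp.ne'
        · -- both positive, so the spread must be large
          have hsp : 2 * K ≤ |Real.log (f j false) - Real.log (f j true)| := by
            by_contra hsp
            exact hbad ⟨h0, h1, lt_of_not_ge hsp⟩
          have hν01 : marg μ j false + marg μ j true = 1 := by
            have := marg_sum (μ := μ) hsum j
            rw [Fintype.sum_bool] at this
            linarith
          rcases le_or_gt (f j true) (f j false) with hor | hor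
          · -- max is f j false
            have hM0 : M j = f j false := by rw [hMdef]; dsimp only; rw [max_eq_left hor]
            have habs : |Real.log (f j false) - Real.log (f j true)|
                = Real.log (f j false) - Real.log (f j true) := by
              rw [abs_of_nonneg]
              have := Real.log_le_log h1 hor
              linarith
            have h2 := two_point_spread hpos (a := f j false) (b := f j true)
              (marg_ge hpos j true) (marg_nonneg hpos j false) hν01 h0 h1
              (by rw [habs] at hsp; exact hsp)
            rw [hBdef]; dsimp only
            rw [hM0]
            calc S j ^ p⁻¹ ≤ ((δ * f j false) ^ p) ^ p⁻¹ := by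
                  apply Real.rpow_le_rpow (hSnn j) _ (by positivity)
                  rw [hSj]; linarith [h2]
              _ = δ * f j false := Real.rpow_rpow_inv (mul_nonneg hδ.le (hf j false)) hp.ne'
          · have hM1 : M j = f j true := by rw [hMdef]; dsimp only; rw [max_eq_right hor.le]
            have habs : |Real.log (f j false) - Real.log (f j true)|
                = Real.log (f j true) - Real.log (f j false) := by
              rw [abs_of_nonpos]
              · ring
              · have := Real.log_le_log h0 hor.le
                linarith
            have hν01' : marg μ j true + marg μ j false = 1 := by linarith
            have h2 := two_point_spread hpos (a := f j true) (b := f j false)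
              (marg_ge hpos j false) (marg_nonneg hpos j true) hν01' h1 h0
              (by rw [habs] at hsp; exact hsp)
            rw [hBdef]; dsimp only
            rw [hM1]
            calc S j ^ p⁻¹ ≤ ((δ * f j true) ^ p) ^ p⁻¹ := by
                  apply Real.rpow_le_rpow (hSnn j) _ (by positivity)
                  rw [hSj]; linarith [h2]
              _ = δ * f j true := Real.rpow_rpow_inv (mul_nonneg hδ.le (hf j true)) hp.ne'
      exact hgoal

    -- ===== main exponential computation =====
    set l : Fin m → Bool → ℝ := fun j b => -Real.log (f j b) with hldef
    have hfe : ∀ j b, f j b = Real.exp (-l j b) := by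
      intro j b
      rw [hldef]; dsimp only; rw [neg_neg, Real.exp_log]
      cases b
      · exact (hkey j).1
      · exact (hkey j).2.1
    set El : Fin m → ℝ := fun j => ∑ b, marg μ j b * l j b with hEldef
    set Z : Fin m → Bool → ℝ := fun j b => l j b - El j with hZdef
    set D : Fin m → ℝ := fun j => l j false - l j true with hDdef
    have hν01 : ∀ j, marg μ j false + marg μ j true = 1 := by
      intro j
      have := marg_sum (μ := μ) hsum j
      rw [Fintype.sum_bool] at this
      linarith
    have hElb : ∀ j, El j = marg μ j true * l j true + marg μ j false * l j false := by
      intro j; rw [hEldef]; dsimp only; rw [Fintype.sum_bool]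
    have hZf : ∀ j, Z j false = marg μ j true * D j := by
      intro j
      rw [hZdef, hDdef]; dsimp only
      rw [hElb j]
      linear_combination (-(l j false)) * (hν01 j)
    have hZt : ∀ j, Z j true = -(marg μ j false * D j) := by
      intro j
      rw [hZdef, hDdef]; dsimp only
      rw [hElb j]
      linear_combination (-(l j true)) * (hν01 j)
    have hmargle1 : ∀ j b, marg μ j b ≤ 1 := by
      intro j b
      have := marg_le hpos hsum j b
      linarith
    have hZb : ∀ j b, |Z j b| ≤ |D j| := by
      intro j b
      cases b
      · rw [hZf j, abs_mul, abs_of_nonneg (marg_nonneg hpos j true)]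
        calc marg μ j true * |D j| ≤ 1 * |D j| :=
              mul_le_mul_of_nonneg_right (hmargle1 j true) (abs_nonneg _)
          _ = |D j| := one_mul _
      · rw [hZt j, abs_neg, abs_mul, abs_of_nonneg (marg_nonneg hpos j false)]
        calc marg μ j false * |D j| ≤ 1 * |D j| :=
              mul_le_mul_of_nonneg_right (hmargle1 j false) (abs_nonneg _)
          _ = |D j| := one_mul _
    have hDK : ∀ j, |D j| ≤ 2*K := by
      intro j
      have h3 := (hkey j).2.2
      have e : D j = -(Real.log (f j false) - Real.log (f j true)) := by
        rw [hDdef, hldef]; dsimp only; ring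
      rw [e, abs_neg]
      exact h3.le
    set ZZ : (Fin m → Bool) → ℝ := fun w => ∑ j, Z j (w j) with hZZdef
    have hZcol : ∀ j, ∑ b, marg μ j b * Z j b = 0 := by
      intro j
      rw [Fintype.sum_bool, hZf j, hZt j]
      ring
    have hZZsum : ∑ w, μ w * ZZ w = 0 := by
      calc ∑ w, μ w * ZZ w = ∑ w, ∑ j, μ w * Z j (w j) := by
            refine Finset.sum_congr rfl fun w _ => ?_
            rw [hZZdef]; dsimp only; rw [Finset.mul_sum]
        _ = ∑ j, ∑ w, μ w * Z j (w j) := Finset.sum_comm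
        _ = ∑ j, ∑ b, marg μ j b * Z j b := by
            refine Finset.sum_congr rfl fun j _ => (marg_apply hsum j (Z j)).symm
        _ = 0 := by
            rw [Finset.sum_congr rfl fun j _ => hZcol j]
            simp
    set EY : ℝ := ∑ j, El j with hEYdef
    have hprodf : ∀ w, ∏ j, f j (w j) = Real.exp (-EY) * Real.exp (-(ZZ w)) := by
      intro w
      rw [← Real.exp_add]
      have e1 : ∏ j, f j (w j) = Real.exp (∑ j, -l j (w j)) := by
        rw [Real.exp_sum]
        exact Finset.prod_congr rfl fun j _ => hfe j (w j)
      rw [e1]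
      congr 1
      have e2 : -EY + -(ZZ w) = ∑ j, -(El j + Z j (w j)) := by
        rw [Finset.sum_neg_distrib, Finset.sum_add_distrib, hEYdef, hZZdef]
        ring
      rw [e2]
      refine Finset.sum_congr rfl fun j _ => ?_
      rw [hZdef]; dsimp only; ring
    have hA : ∑ w, μ w * ∏ j, f j (w j)
        = Real.exp (-EY) * (1 + ∑ w, μ w * g (ZZ w)) := by
      have e1 : ∀ w, μ w * ∏ j, f j (w j)
          = Real.exp (-EY) * (μ w * Real.exp (-(ZZ w))) := by
        intro w; rw [hprodf w]; ring
      rw [Finset.sum_congr rfl fun w _ => e1 w, ← Finset.mul_sum]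
      congr 1
      have e2 : ∀ w, μ w * Real.exp (-(ZZ w))
          = (μ w - μ w * ZZ w) + μ w * g (ZZ w) := by
        intro w; unfold g; ring
      rw [Finset.sum_congr rfl fun w _ => e2 w]
      rw [Finset.sum_add_distrib, Finset.sum_sub_distrib, hsum, hZZsum]
      ring
    set G : Fin m → ℝ := fun j => ∑ b, marg μ j b * g (p * Z j b) with hGdef
    have hGnn : ∀ j, 0 ≤ G j := fun j => Finset.sum_nonneg fun b _ =>
      mul_nonneg (marg_nonneg hpos j b) (g_nonneg _)
    have hSeq : ∀ j, S j = Real.exp (-(p * El j)) * (1 + G j) := by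
      intro j
      have e1 : ∀ b, f j b ^ p = Real.exp (-(p * El j)) * Real.exp (-(p * Z j b)) := by
        intro b
        rw [hfe j b, ← Real.exp_mul, ← Real.exp_add]
        congr 1
        have e0 : l j b = El j + Z j b := by rw [hZdef]; dsimp only; ring
        rw [show (-l j b) * p = -(l j b) * p by ring, e0]
        ring
      simp only [hSdef, hGdef]
      calc ∑ b, marg μ j b * f j b ^ p
          = ∑ b, Real.exp (-(p * El j)) *
              ((marg μ j b - p * (marg μ j b * Z j b)) + marg μ j b * g (p * Z j b)) := by
            refine Finset.sum_congr rfl fun b _ => ?_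
            rw [e1 b]; unfold g; ring
        _ = Real.exp (-(p * El j)) * (1 + ∑ b, marg μ j b * g (p * Z j b)) := by
            rw [← Finset.mul_sum]
            congr 1
            rw [Finset.sum_add_distrib, Finset.sum_sub_distrib, marg_sum hsum j,
              show ∑ b, p * (marg μ j b * Z j b) = p * ∑ b, marg μ j b * Z j b
                from (Finset.mul_sum _ _ _).symm,
              hZcol j]
            ring
    have hBjeq : ∀ j, Bj j = Real.exp (-El j) * (1 + G j) ^ p⁻¹ := by
      intro j
      simp only [hBdef]
      rw [hSeq j, Real.mul_rpow (Real.exp_pos _).le (by linarith [hGnn j] : (0:ℝ) ≤ 1 + G j)]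
      congr 1
      rw [← Real.exp_mul]
      congr 1
      rw [show -(p * El j) * p⁻¹ = -(El j) * (p * p⁻¹) by ring, mul_inv_cancel₀ hp.ne', mul_one]
    have hBprod : ∏ j, Bj j = Real.exp (-EY) * ∏ j, (1 + G j) ^ p⁻¹ := by
      rw [Finset.prod_congr rfl fun j _ => hBjeq j, Finset.prod_mul_distrib]
      congr 1
      rw [← Real.exp_sum]
      congr 1
      rw [hEYdef, ← Finset.sum_neg_distrib]
    set S2 : ℝ := ∑ j, (D j)^2 with hS2def
    have hS2nn : 0 ≤ S2 := Finset.sum_nonneg fun j _ => sq_nonneg _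
    have hGle : ∀ j, G j ≤ 2 * p^2 * (D j)^2 := by
      intro j
      simp only [hGdef]
      calc ∑ b, marg μ j b * g (p * Z j b)
          ≤ ∑ b, marg μ j b * (2 * p^2 * (D j)^2) := by
            apply Finset.sum_le_sum
            intro b _
            apply mul_le_mul_of_nonneg_left _ (marg_nonneg hpos j b)
            have h1 : |p * Z j b| ≤ 1/2 := by
              rw [abs_mul, abs_of_nonneg hp.le]
              calc p * |Z j b| ≤ p * (2*K) :=
                    mul_le_mul_of_nonneg_left (le_trans (hZb j b) (hDK j)) hp.le
                _ ≤ 1/2 := by nlinarith [hpK]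
            calc g (p * Z j b) ≤ 2 * (p * Z j b)^2 := g_quad h1
              _ ≤ 2 * p^2 * (D j)^2 := by
                  nlinarith [hZb j b, abs_nonneg (Z j b), abs_nonneg (D j),
                    sq_abs (Z j b), sq_abs (D j), sq_nonneg p,
                    mul_self_le_mul_self (abs_nonneg (Z j b)) (hZb j b)]
        _ = 2 * p^2 * (D j)^2 := by rw [← Finset.sum_mul, marg_sum hsum j, one_mul]
    have hstep1 : ∏ j, (1 + G j) ^ p⁻¹ ≤ Real.exp (2 * p * S2) := by
      calc ∏ j, (1 + G j) ^ p⁻¹ ≤ ∏ j, Real.exp (2 * p * (D j)^2) := by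
            apply Finset.prod_le_prod
              (fun j _ => Real.rpow_nonneg (by linarith [hGnn j]) _)
            intro j _
            have hg1 : (0:ℝ) < 1 + G j := by linarith [hGnn j]
            rw [Real.rpow_def_of_pos hg1]
            apply Real.exp_le_exp.mpr
            have hlog : Real.log (1 + G j) ≤ G j := by
              have := Real.log_le_sub_one_of_pos hg1; linarith
            calc Real.log (1 + G j) * p⁻¹ ≤ G j * p⁻¹ :=
                  mul_le_mul_of_nonneg_right hlog (inv_nonneg.mpr hp.le)
              _ ≤ (2 * p^2 * (D j)^2) * p⁻¹ :=
                  mul_le_mul_of_nonneg_right (hGle j) (inv_nonneg.mpr hp.le)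
              _ = 2 * p * (D j)^2 := by
                  rw [show (2 * p^2 * (D j)^2) * p⁻¹ = 2 * (p * p⁻¹) * p * (D j)^2 by ring,
                    mul_inv_cancel₀ hp.ne']
                  ring
        _ = Real.exp (2 * p * S2) := by
            rw [← Real.exp_sum]
            congr 1
            rw [hS2def, Finset.mul_sum]
    have hS2K : S2 ≤ m * (4 * K^2) := by
      rw [hS2def]
      calc ∑ j, (D j)^2 ≤ ∑ _j : Fin m, 4*K^2 := by
            apply Finset.sum_le_sum
            intro j _
            nlinarith [hDK j, abs_nonneg (D j), sq_abs (D j)]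
        _ = m * (4*K^2) := by
            rw [Finset.sum_const, Finset.card_univ, Fintype.card_fin, nsmul_eq_mul]
    have hsmall : 2 * p * S2 ≤ 1/2 := by
      have h8 := pc_KKm_le hpos
      rw [← hpdef, ← hKdef] at h8
      have h9 := mul_le_mul_of_nonneg_left hS2K hp.le
      nlinarith [h9, h8]
    have hstep2 : Real.exp (2*p*S2) ≤ 1 + 4*p*S2 := by
      have := exp_le_one_add_two
        (mul_nonneg (mul_nonneg (by norm_num) hp.le) hS2nn) hsmall
      linarith
    have hstep3 : 4*p*S2 ≤ ∑ w, μ w * g (ZZ w) := by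
      have hEgnn : 0 ≤ ∑ w, μ w * g (ZZ w) :=
        Finset.sum_nonneg fun w _ => mul_nonneg (hpos w).le (g_nonneg _)
      rcases Nat.eq_zero_or_pos m with hm | hm
      · have hz : S2 = 0 := by rw [hS2def]; subst hm; simp
        rw [hz]; simpa using hEgnn
      · have hne' : Nonempty (Fin m) := ⟨⟨0, hm⟩⟩
        obtain ⟨j₀, _, hj₀⟩ := Finset.exists_max_image Finset.univ
          (fun j => (D j)^2) Finset.univ_nonempty
        have hS2m : S2 ≤ m * (D j₀)^2 := by
          rw [hS2def]
          calc ∑ j, (D j)^2 ≤ ∑ _j : Fin m, (D j₀)^2 :=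
                Finset.sum_le_sum fun j _ => hj₀ j (Finset.mem_univ j)
            _ = m * (D j₀)^2 := by
                rw [Finset.sum_const, Finset.card_univ, Fintype.card_fin, nsmul_eq_mul]
        set w0 : Fin m → Bool := fun _ => false with hw0
        set w1 : Fin m → Bool := Function.update w0 j₀ true with hw1
        have hne : w0 ≠ w1 := by
          intro h
          have h2 : w0 j₀ = w1 j₀ := by rw [h]
          rw [hw1, Function.update_self] at h2
          simp [hw0] at h2
        have hZZ1 : ZZ w1 = ZZ w0 + -(D j₀) := by
          have e : ZZ w1 - ZZ w0 = ∑ j, (Z j (w1 j) - Z j (w0 j)) :=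
            (Finset.sum_sub_distrib _ _).symm
          have e2 : ∀ j, Z j (w1 j) - Z j (w0 j) = if j = j₀ then -(D j₀) else 0 := by
            intro j
            by_cases hj : j = j₀
            · subst hj
              rw [if_pos rfl, hw1, Function.update_self]
              have : w0 j = false := rfl
              rw [this, hDdef, hZdef]
              dsimp only
              ring
            · rw [hw1, Function.update_of_ne hj, if_neg hj, sub_self]
          rw [Finset.sum_congr rfl fun j _ => e2 j,
            Finset.sum_ite_eq' Finset.univ j₀ (fun _ => -(D j₀))] at e
          rw [if_pos (Finset.mem_univ j₀)] at e
          linarith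
        have hpair := pair_lb (ZZ w0) (-(D j₀))
        rw [← hZZ1, show (-(D j₀))^2 = (D j₀)^2 by ring] at hpair
        have hsub : μ w0 * g (ZZ w0) + μ w1 * g (ZZ w1) ≤ ∑ w, μ w * g (ZZ w) := by
          have h9 := Finset.sum_le_sum_of_subset_of_nonneg
            (s := ({w0, w1} : Finset (Fin m → Bool))) (t := Finset.univ)
            (f := fun w => μ w * g (ZZ w))
            (Finset.subset_univ _)
            (fun w _ _ => mul_nonneg (hpos w).le (g_nonneg _))
          rwa [Finset.sum_pair hne] at h9
        have hlb : δ * (g (ZZ w0) + g (ZZ w1)) ≤ μ w0 * g (ZZ w0) + μ w1 * g (ZZ w1) := by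
          have d0 := del_le (μ := μ) w0
          have d1 := del_le (μ := μ) w1
          nlinarith [g_nonneg (ZZ w0), g_nonneg (ZZ w1)]
        set v : ℝ := (D j₀)^2 with hvdef
        have hv : 0 ≤ v := sq_nonneg _
        have hvK : v ≤ 4*K^2 := by
          rw [hvdef]
          nlinarith [hDK j₀, abs_nonneg (D j₀), sq_abs (D j₀)]
        have h32 : (0:ℝ) < 32 + 4*K^2 := by positivity
        have hlog1 : v/(32 + 4*K^2) ≤ Real.log (1 + v/32) := by
          have l1 : (v/32)/(1+(v/32)) ≤ Real.log (1+(v/32)) :=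
            log_one_add_ge (div_nonneg hv (by norm_num))
          have l2 : (v/32)/(1+(v/32)) = v/(32+v) := by
            have d1 : (0:ℝ) < 32 + v := by linarith
            have d2 : (0:ℝ) < 1 + v/32 := by linarith
            field_simp
          have l3 : v/(32+4*K^2) ≤ v/(32+v) := by
            rw [div_le_div_iff₀ h32 (by linarith : (0:ℝ) < 32 + v)]
            nlinarith
          rw [l2] at l1
          linarith
        have hc1 : 4*p*S2 ≤ 4*p*(m*v) :=
          mul_le_mul_of_nonneg_left hS2m
            (mul_nonneg (by norm_num) hp.le : (0:ℝ) ≤ 4*p)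
        have hmain := pc_main_le hpos
        rw [← hpdef, ← hKdef, ← hδdef] at hmain
        have hc2 : 4*p*(m*v) ≤ 2*δ*(v/(32+4*K^2)) := by
          rw [show 2*δ*(v/(32+4*K^2)) = (2*δ*v)/(32+4*K^2) by ring,
            le_div_iff₀ h32]
          nlinarith [mul_le_mul_of_nonneg_right hmain hv]
        have hc3 : 2*δ*(v/(32+4*K^2)) ≤ δ * (2 * Real.log (1+v/32)) := by
          have := mul_le_mul_of_nonneg_left hlog1 hδ.le
          nlinarith [this]
        calc 4*p*S2 ≤ 4*p*(m*v) := hc1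
          _ ≤ 2*δ*(v/(32+4*K^2)) := hc2
          _ ≤ δ * (2*Real.log (1+v/32)) := hc3
          _ ≤ δ * (g (ZZ w0) + g (ZZ w1)) := by
              apply mul_le_mul_of_nonneg_left _ hδ.le
              rw [hvdef] at *
              exact hpair
          _ ≤ μ w0 * g (ZZ w0) + μ w1 * g (ZZ w1) := hlb
          _ ≤ ∑ w, μ w * g (ZZ w) := hsub
    calc ∏ j, Bj j = Real.exp (-EY) * ∏ j, (1 + G j) ^ p⁻¹ := hBprod
      _ ≤ Real.exp (-EY) * (1 + ∑ w, μ w * g (ZZ w)) := by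
          apply mul_le_mul_of_nonneg_left _ (Real.exp_pos _).le
          calc ∏ j, (1 + G j) ^ p⁻¹ ≤ Real.exp (2*p*S2) := hstep1
            _ ≤ 1 + 4*p*S2 := hstep2
            _ ≤ 1 + ∑ w, μ w * g (ZZ w) := by linarith [hstep3]
      _ = ∑ w, μ w * ∏ j, f j (w j) := hA.symm

set_option maxHeartbeats 1000000 in
lemma tensor (hpos : ∀ w, 0 < μ w) (hsum : ∑ w, μ w = 1) (n : ℕ) :
    ∀ (f : Fin m → (Fin n → Bool) → ℝ), (∀ j y, 0 ≤ f j y) →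
    ∏ j, (∑ y : Fin n → Bool, (∏ i, marg μ j (y i)) * f j y ^ pc m μ) ^ (pc m μ)⁻¹ ≤
    ∑ x : Fin n → (Fin m → Bool), (∏ i, μ (x i)) * ∏ j, f j (fun i => x i j) := by
  have hp : 0 < pc m μ := pc_pos hpos
  induction n with
  | zero =>
    intro f hf
    simp only [Finset.univ_unique, Finset.sum_singleton, Finset.univ_eq_empty,
      Finset.prod_empty, one_mul]
    refine le_of_eq (Finset.prod_congr rfl fun j _ => ?_)
    rw [Real.rpow_rpow_inv (hf j _) hp.ne']
    congr 1
    exact funext fun i => i.elim0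
  | succ n ih =>
    intro f hf
    set p := pc m μ with hpdef
    set N : Fin m → Bool → ℝ :=
      fun j b => ∑ y : Fin n → Bool, (∏ i, marg μ j (y i)) * f j (Fin.cons b y) ^ p
      with hNdef
    have hNnn : ∀ j b, 0 ≤ N j b := by
      intro j b
      apply Finset.sum_nonneg
      intro y _
      exact mul_nonneg (Finset.prod_nonneg fun i _ => marg_nonneg hpos j (y i))
        (Real.rpow_nonneg (hf j _) _)
    have hcons : ∀ (w : Fin m → Bool) (x : Fin n → (Fin m → Bool)) (j : Fin m),
        (fun i => (Fin.cons w x : Fin (n+1) → (Fin m → Bool)) i j)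
          = Fin.cons (w j) (fun i => x i j) := by
      intro w x j
      funext i
      refine Fin.cases ?_ ?_ i
      · simp
      · intro i'; simp
    have eR : ∑ x : Fin (n+1) → (Fin m → Bool), (∏ i, μ (x i)) * ∏ j, f j (fun i => x i j)
        = ∑ w : Fin m → Bool, μ w * ∑ x : Fin n → (Fin m → Bool),
            (∏ i, μ (x i)) * ∏ j, f j (Fin.cons (w j) (fun i => x i j)) := by
      rw [← Fintype.sum_equiv (Fin.consEquiv (fun _ => (Fin m → Bool)))
        (fun wx => (∏ i, μ (Fin.consEquiv (fun _ => (Fin m → Bool)) wx i)) *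
          ∏ j, f j (fun i => Fin.consEquiv (fun _ => (Fin m → Bool)) wx i j))
        (fun x => (∏ i, μ (x i)) * ∏ j, f j (fun i => x i j))
        (fun wx => rfl)]
      rw [Fintype.sum_prod_type]
      refine Finset.sum_congr rfl fun w _ => ?_
      rw [Finset.mul_sum]
      refine Finset.sum_congr rfl fun x _ => ?_
      have e1 : ∏ i, μ (Fin.consEquiv (fun _ => (Fin m → Bool)) (w, x) i)
          = μ w * ∏ i, μ (x i) := by
        rw [show (Fin.consEquiv (fun _ => (Fin m → Bool))) (w, x) = Fin.cons w x from rfl]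
        rw [Fin.prod_univ_succ]
        simp
      have e2 : ∀ j, f j (fun i => Fin.consEquiv (fun _ => (Fin m → Bool)) (w, x) i j)
          = f j (Fin.cons (w j) (fun i => x i j)) := by
        intro j
        rw [show (Fin.consEquiv (fun _ => (Fin m → Bool))) (w, x) = Fin.cons w x from rfl]
        rw [hcons]
      rw [e1, Finset.prod_congr rfl fun j _ => e2 j]
      ring
    have eL : ∀ j, (∑ y : Fin (n+1) → Bool, (∏ i, marg μ j (y i)) * f j y ^ p)
        = ∑ b, marg μ j b * N j b := by
      intro j
      rw [← Fintype.sum_equiv (Fin.consEquiv (fun _ => Bool))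
        (fun by_ => (∏ i, marg μ j ((Fin.consEquiv (fun _ => Bool)) by_ i)) *
          f j ((Fin.consEquiv (fun _ => Bool)) by_) ^ p)
        (fun y => (∏ i, marg μ j (y i)) * f j y ^ p)
        (fun by_ => rfl)]
      rw [Fintype.sum_prod_type]
      refine Finset.sum_congr rfl fun b _ => ?_
      simp only [hNdef]
      rw [Finset.mul_sum]
      refine Finset.sum_congr rfl fun y _ => ?_
      rw [show (Fin.consEquiv (fun _ => Bool)) (b, y) = Fin.cons b y from rfl]
      rw [Fin.prod_univ_succ]
      simp only [Fin.cons_zero, Fin.cons_succ]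
      ring
    have hinner : ∀ w : Fin m → Bool,
        ∏ j, (N j (w j)) ^ p⁻¹
          ≤ ∑ x : Fin n → (Fin m → Bool),
              (∏ i, μ (x i)) * ∏ j, f j (Fin.cons (w j) (fun i => x i j)) :=
      fun w => ih (fun j y => f j (Fin.cons (w j) y)) (fun j y => hf j _)
    have h1 := onedim hpos hsum (fun j b => N j b ^ p⁻¹)
      (fun j b => Real.rpow_nonneg (hNnn j b) _)
    have h2 : ∀ j b, ((N j b ^ p⁻¹ : ℝ)) ^ p = N j b :=
      fun j b => Real.rpow_inv_rpow (hNnn j b) hp.ne'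
    calc ∏ j, (∑ y : Fin (n+1) → Bool, (∏ i, marg μ j (y i)) * f j y ^ p) ^ p⁻¹
        = ∏ j, (∑ b, marg μ j b * ((N j b ^ p⁻¹) ^ p)) ^ p⁻¹ := by
          refine Finset.prod_congr rfl fun j _ => ?_
          rw [eL j]
          congr 1
          exact Finset.sum_congr rfl fun b _ => by rw [h2 j b]
      _ ≤ ∑ w, μ w * ∏ j, (fun j b => N j b ^ p⁻¹) j (w j) := h1
      _ ≤ ∑ w : Fin m → Bool, μ w * ∑ x : Fin n → (Fin m → Bool),
            (∏ i, μ (x i)) * ∏ j, f j (Fin.cons (w j) (fun i => x i j)) := by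
          apply Finset.sum_le_sum
          intro w _
          exact mul_le_mul_of_nonneg_left (hinner w) (hpos w).le
      _ = ∑ x : Fin (n+1) → (Fin m → Bool), (∏ i, μ (x i)) * ∏ j, f j (fun i => x i j) :=
          eR.symm

end HL

/-- **Hitting lemma.** If `μ` has full support on `{0,1}^m` and each `φ_j` has expectation
bounded away from `0` and `1`, then every output pattern `α` occurs with probability
at least `γ`. -/
theorem hitting_lemma
    (m : ℕ) (μ : (Fin m → Bool) → ℝ)
    (hpos : ∀ w, 0 < μ w) (hsum : ∑ w, μ w = 1)
    (ε : ℝ) (hε : 0 < ε) :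
    ∃ γ > (0 : ℝ),
      ∀ (n : ℕ) (φ : Fin m → (Fin n → Bool) → Bool),
        (∀ j, ε ≤ expProd (marg μ j) (φ j) ∧ expProd (marg μ j) (φ j) ≤ 1 - ε) →
        ∀ α : Fin m → Bool,
          γ < ∑ x : Fin n → (Fin m → Bool), (∏ i, μ (x i)) *
                (if (fun j => φ j (fun i => x i j)) = α then 1 else 0) := by
  classical
  have hp : 0 < HL.pc m μ := HL.pc_pos hpos
  refine ⟨(ε ^ (HL.pc m μ)⁻¹) ^ m / 2,
    div_pos (pow_pos (Real.rpow_pos_of_pos hε _) m) two_pos, ?_⟩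
  intro n φ hφ α
  set f : Fin m → (Fin n → Bool) → ℝ := fun j y => if φ j y = α j then 1 else 0 with hfdef
  have hfnn : ∀ j y, 0 ≤ f j y := by
    intro j y
    simp only [hfdef]
    split <;> norm_num
  have htensor := HL.tensor hpos hsum n f hfnn
  have hRHS : ∑ x : Fin n → (Fin m → Bool), (∏ i, μ (x i)) * ∏ j, f j (fun i => x i j)
      = ∑ x : Fin n → (Fin m → Bool), (∏ i, μ (x i)) *
          (if (fun j => φ j (fun i => x i j)) = α then 1 else 0) := by
    refine Finset.sum_congr rfl fun x _ => ?_
    congr 1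
    by_cases h : (fun j => φ j (fun i => x i j)) = α
    · rw [if_pos h]
      apply Finset.prod_eq_one
      intro j _
      simp only [hfdef]
      rw [if_pos (congrFun h j)]
    · rw [if_neg h]
      obtain ⟨j, hj⟩ := Function.ne_iff.mp h
      apply Finset.prod_eq_zero (Finset.mem_univ j)
      simp only [hfdef]
      rw [if_neg hj]
  have hprodsum : ∀ j, ∑ y : Fin n → Bool, (∏ i, marg μ j (y i)) = 1 := by
    intro j
    have h0 := Finset.prod_univ_sum (fun _ : Fin n => (Finset.univ : Finset Bool))
      (fun _ b => marg μ j b)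
    rw [Fintype.piFinset_univ] at h0
    rw [← h0]
    calc ∏ _i : Fin n, ∑ b, marg μ j b = ∏ _i : Fin n, (1:ℝ) :=
          Finset.prod_congr rfl fun i _ => HL.marg_sum hsum j
      _ = 1 := Finset.prod_const_one
  have hprob : ∀ j, ε ≤ ∑ y : Fin n → Bool, (∏ i, marg μ j (y i)) * f j y ^ HL.pc m μ := by
    intro j
    have hpow : ∀ y, f j y ^ HL.pc m μ = f j y := by
      intro y
      simp only [hfdef]
      split
      · exact Real.one_rpow _
      · exact Real.zero_rpow hp.ne'
    rw [Finset.sum_congr rfl fun y _ => by rw [hpow y]]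
    cases hα : α j with
    | true =>
      have he : ∑ y : Fin n → Bool, (∏ i, marg μ j (y i)) * f j y
          = expProd (marg μ j) (φ j) := by
        unfold expProd
        refine Finset.sum_congr rfl fun y _ => ?_
        congr 1
        simp only [hfdef, hα]
        cases hb : φ j y <;> simp [bval, hb]
      rw [he]
      exact (hφ j).1
    | false =>
      have he : ∑ y : Fin n → Bool, (∏ i, marg μ j (y i)) * f j y
          = (∑ y : Fin n → Bool, (∏ i, marg μ j (y i))) - expProd (marg μ j) (φ j) := by
        unfold expProd
        rw [← Finset.sum_sub_distrib]
        refine Finset.sum_congr rfl fun y _ => ?_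
        simp only [hfdef, hα]
        cases hb : φ j y <;> simp [bval, hb]
      rw [he, hprodsum j]
      linarith [(hφ j).2]
  have hLHS : (ε ^ (HL.pc m μ)⁻¹) ^ m
      ≤ ∏ j, (∑ y : Fin n → Bool, (∏ i, marg μ j (y i)) * f j y ^ HL.pc m μ) ^ (HL.pc m μ)⁻¹ := by
    have e1 : ∏ _j : Fin m, (ε ^ (HL.pc m μ)⁻¹) = (ε ^ (HL.pc m μ)⁻¹) ^ m := by
      rw [Finset.prod_const, Finset.card_univ, Fintype.card_fin]
    rw [← e1]
    apply Finset.prod_le_prod (fun j _ => Real.rpow_nonneg hε.le _)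
    intro j _
    exact Real.rpow_le_rpow hε.le (hprob j) (inv_nonneg.mpr hp.le)
  have hfin : (ε ^ (HL.pc m μ)⁻¹) ^ m
      ≤ ∑ x : Fin n → (Fin m → Bool), (∏ i, μ (x i)) *
          (if (fun j => φ j (fun i => x i j)) = α then 1 else 0) := by
    rw [← hRHS]
    exact le_trans hLHS htensor
  calc (ε ^ (HL.pc m μ)⁻¹) ^ m / 2 < (ε ^ (HL.pc m μ)⁻¹) ^ m := by
        have := pow_pos (Real.rpow_pos_of_pos hε (HL.pc m μ)⁻¹) m
        linarith
    _ ≤ _ := hfin
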